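/- Let f : (ℕ→ℕ) → Set (ℕ→ℕ) be a problem with ACC_ℕ ≤_W* f. Then there exist a point a and a sequence (a_n) in Baire space with a_n → a, such that a ∈ dom f, a_n ∈ dom f for every n, and the restriction of f to S = {a_n | n ∈ ℕ} ∪ {a} is discontinuous, i.e. there is no F : (ℕ→ℕ) → (ℕ→ℕ) continuous on S with F x ∈ f x for all x ∈ S. -/
import Mathlib


/-- The domain of a problem (multivalued function on Baire space). -/
def domP (f : (ℕ → ℕ) → Set (ℕ → ℕ)) : Set (ℕ → ℕ) := {p | f p ≠ ∅}

/-- The domain of a first-order problem. -/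
def domFO (f : (ℕ → ℕ) → Set ℕ) : Set (ℕ → ℕ) := {p | f p ≠ ∅}

/-- The problem `ACC_ℕ`. -/
def ACCN (p : ℕ → ℕ) : Set ℕ :=
  {n | (∀ i j, p i ≠ 0 → p j ≠ 0 → p i = p j) ∧ ∀ k, p k ≠ n + 1}

/-- Continuous Weihrauch reducibility of a first-order problem `g` to a problem `f`. -/
def RedFO (g : (ℕ → ℕ) → Set ℕ) (f : (ℕ → ℕ) → Set (ℕ → ℕ)) : Prop :=
  ∃ (H : (ℕ → ℕ) → (ℕ → ℕ)) (K : (ℕ → ℕ) × (ℕ → ℕ) → ℕ),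
    ContinuousOn H (domFO g) ∧
    ContinuousOn K {pq : (ℕ → ℕ) × (ℕ → ℕ) | pq.1 ∈ domFO g ∧ pq.2 ∈ f (H pq.1)} ∧
    (∀ p ∈ domFO g, H p ∈ domP f) ∧
    (∀ p ∈ domFO g, ∀ q ∈ f (H p), K (p, q) ∈ g p)

theorem discOnSeq_of_accn_red (f : (ℕ → ℕ) → Set (ℕ → ℕ)) (hred : RedFO ACCN f) :
    ∃ (a : ℕ → ℕ) (aseq : ℕ → (ℕ → ℕ)),
      Filter.Tendsto aseq Filter.atTop (nhds a) ∧
      a ∈ domP f ∧ (∀ n, aseq n ∈ domP f) ∧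
      ¬ ∃ F : (ℕ → ℕ) → (ℕ → ℕ),
          ContinuousOn F (Set.range aseq ∪ {a}) ∧
          ∀ x ∈ Set.range aseq ∪ {a}, F x ∈ f x := by

  obtain ⟨H, K, hH, hK, hdom, hsol⟩ := hred
  set z : ℕ → ℕ := fun _ => 0 with hz
  have hzdom : z ∈ domFO ACCN := by
    rw [domFO, Set.mem_setOf_eq, ← Set.nonempty_iff_ne_empty]
    exact ⟨0, fun i j hi _ => absurd rfl hi, fun k => by simp [z]⟩
  set q : ℕ → ℕ → ℕ := fun k i => if i = k then (Nat.unpair k).2 + 1 else 0 with hqd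
  have hqdom : ∀ k, q k ∈ domFO ACCN := by
    intro k
    rw [domFO, Set.mem_setOf_eq, ← Set.nonempty_iff_ne_empty]
    refine ⟨(Nat.unpair k).2 + 1, ?_, ?_⟩
    · intro i j hi hj
      simp only [hqd] at hi hj ⊢
      split at hi <;> split at hj <;> simp_all
    · intro j
      simp only [hqd]
      split <;> omega
  have hq0 : Filter.Tendsto q Filter.atTop (nhds z) := by
    rw [tendsto_pi_nhds]
    intro i
    refine Filter.Tendsto.congr' ?_ tendsto_const_nhds
    filter_upwards [Filter.eventually_gt_atTop i] with k hk
    simp only [hqd]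
    rw [if_neg (by omega)]
  have hHz : Filter.Tendsto (fun k => H (q k)) Filter.atTop (nhds (H z)) := by
    refine (hH z hzdom).tendsto.comp ?_
    rw [tendsto_nhdsWithin_iff]
    exact ⟨hq0, Filter.Eventually.of_forall hqdom⟩
  refine ⟨H z, fun k => H (q k), hHz, hdom z hzdom, fun k => hdom _ (hqdom k), ?_⟩
  rintro ⟨F, hFc, hFs⟩
  have haS : H z ∈ Set.range (fun k => H (q k)) ∪ {H z} := Or.inr rfl
  have hFa : F (H z) ∈ f (H z) := hFs _ haS
  have hT : Filter.Tendsto (fun k => K (q k, F (H (q k)))) Filter.atTop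
      (nhds (K (z, F (H z)))) := by
    refine (hK (z, F (H z)) ⟨hzdom, hFa⟩).tendsto.comp ?_
    rw [tendsto_nhdsWithin_iff]
    constructor
    · rw [nhds_prod_eq]
      refine Filter.Tendsto.prodMk hq0 ?_
      refine (hFc (H z) haS).tendsto.comp ?_
      rw [tendsto_nhdsWithin_iff]
      exact ⟨hHz, Filter.Eventually.of_forall (fun k => Or.inl ⟨k, rfl⟩)⟩
    · exact Filter.Eventually.of_forall (fun k => ⟨hqdom k, hFs _ (Or.inl ⟨k, rfl⟩)⟩)
  have hev : ∀ᶠ k in Filter.atTop, K (q k, F (H (q k))) = K (z, F (H z)) :=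
    hT ((isOpen_discrete ({K (z, F (H z))} : Set ℕ)).mem_nhds rfl)
  obtain ⟨N, hN⟩ := hev.exists_forall_of_atTop
  set k := Nat.pair N (K (z, F (H z))) with hk
  have hke : K (q k, F (H (q k))) = K (z, F (H z)) := hN k (Nat.left_le_pair _ _)
  have hcor : K (q k, F (H (q k))) ∈ ACCN (q k) :=
    hsol (q k) (hqdom k) _ (hFs _ (Or.inl ⟨k, rfl⟩))
  have := hcor.2 k
  rw [hke] at this
  apply this
  simp only [hqd, if_pos rfl, hk, Nat.unpair_pair]
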